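/- If R is a commutative ring containing an element r such that both r and r-1 are invertible, then any R-quadratic map f: M → N between R-modules decomposes uniquely as a sum f = f₁ + f₂ where f₁ is R-linear and f₂ is homogeneous R-quadratic. -/

import Mathlib

/-- The cross-effect of a map between abelian groups. -/
def crossEff {M N : Type*} [AddCommGroup M] [AddCommGroup N] (f : M → N) (x y : M) : N :=
  f (x + y) - f x - f y

/-- `f : M → N` is `R`-quadratic: its cross-effect is `R`-bilinear and its second
cross-actions `x ↦ f (r • x) - r ^ 2 • f x` are `R`-linear. -/
def IsQuadratic (R : Type*) {M N : Type*} [CommRing R] [AddCommGroup M] [Module R M]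
    [AddCommGroup N] [Module R N] (f : M → N) : Prop :=
  (∀ x y z : M, crossEff f (x + y) z = crossEff f x z + crossEff f y z) ∧
  (∀ (r : R) (x y : M), crossEff f (r • x) y = r • crossEff f x y) ∧
  (∀ x y z : M, crossEff f x (y + z) = crossEff f x y + crossEff f x z) ∧
  (∀ (r : R) (x y : M), crossEff f x (r • y) = r • crossEff f x y) ∧
  (∀ (r : R) (x y : M), f (r • (x + y)) - r ^ 2 • f (x + y)
      = (f (r • x) - r ^ 2 • f x) + (f (r • y) - r ^ 2 • f y)) ∧
  (∀ (r s : R) (x : M), f (r • s • x) - r ^ 2 • f (s • x) = s • (f (r • x) - r ^ 2 • f x))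

/-- A homogeneous `R`-quadratic map. -/
def IsHomogQuadratic (R : Type*) {M N : Type*} [CommRing R] [AddCommGroup M] [Module R M]
    [AddCommGroup N] [Module R N] (f : M → N) : Prop :=
  IsQuadratic R f ∧ ∀ (r : R) (x : M), f (r • x) = r ^ 2 • f x

/-- If `R` contains an element `r` with `r` and `r - 1` invertible, then every `R`-quadratic
map decomposes uniquely as a sum of an `R`-linear map and a homogeneous `R`-quadratic map. -/
theorem quadratic_decomposition_of_unit {R M N : Type*} [CommRing R] [AddCommGroup M]
    [Module R M] [AddCommGroup N] [Module R N]
    (r : R) (hr : IsUnit r) (hr1 : IsUnit (r - 1))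
    (f : M → N) (hf : IsQuadratic R f) :
    ∃! p : (M →ₗ[R] N) × (M → N),
      IsHomogQuadratic R p.2 ∧ ∀ x : M, f x = p.1 x + p.2 x := by
  obtain ⟨c, hc⟩ := (hr.mul hr1).exists_left_inv
  have hcu : (-c) * (r - r ^ 2) = 1 := by linear_combination hc
  obtain ⟨h1, h2, h3, h4, h5, h6⟩ := hf
  set L : M →ₗ[R] N :=
    { toFun := fun x => (-c) • (f (r • x) - r ^ 2 • f x)
      map_add' := fun x y => by rw [h5, smul_add]
      map_smul' := fun s x => by
        simp only [RingHom.id_apply]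
        rw [h6 r s x, smul_comm] } with hL
  have hLdef : ∀ x : M, L x = (-c) • (f (r • x) - r ^ 2 • f x) := fun x => rfl
  have key : ∀ (s : R) (x : M), f (s • x) - s ^ 2 • f x = (s - s ^ 2) • L x := by
    intro s x
    have e1 := h6 s r x
    have e2 := h6 r s x
    rw [smul_comm s r x] at e1
    have hkey : (r - r ^ 2) • (f (s • x) - s ^ 2 • f x)
        = (s - s ^ 2) • (f (r • x) - r ^ 2 • f x) := by
      linear_combination (norm := module) e2 - e1
    calc f (s • x) - s ^ 2 • f x
        = ((-c) * (r - r ^ 2)) • (f (s • x) - s ^ 2 • f x) := by rw [hcu, one_smul]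
      _ = (-c) • ((r - r ^ 2) • (f (s • x) - s ^ 2 • f x)) := by rw [mul_smul]
      _ = (-c) • ((s - s ^ 2) • (f (r • x) - r ^ 2 • f x)) := by rw [hkey]
      _ = (s - s ^ 2) • L x := by rw [smul_comm, hLdef]
  have f2hom : ∀ (s : R) (x : M), f (s • x) - L (s • x) = s ^ 2 • (f x - L x) := by
    intro s x
    have hk := key s x
    have hl := L.map_smul s x
    linear_combination (norm := module) hk - hl
  have hce : ∀ x y : M, crossEff (fun z => f z - L z) x y = crossEff f x y := by
    intro x y
    simp only [crossEff, map_add]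
    abel
  refine ⟨(L, fun x => f x - L x), ⟨⟨⟨?_, ?_, ?_, ?_, ?_, ?_⟩, ?_⟩, ?_⟩, ?_⟩
  · intro x y z; rw [hce, hce, hce]; exact h1 x y z
  · intro s x y; rw [hce, hce]; exact h2 s x y
  · intro x y z; rw [hce, hce, hce]; exact h3 x y z
  · intro s x y; rw [hce, hce]; exact h4 s x y
  · intro s x y
    simp only [f2hom]
    simp
  · intro s t x
    simp only [f2hom]
    simp
  · intro s x
    have := f2hom s x
    linear_combination (norm := module) this
  · intro x; dsimp only; abel
  · rintro ⟨L', Q⟩ ⟨⟨hQq, hQhom⟩, hsum⟩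
    have hL' : ∀ x : M, L' x = L x := by
      intro x
      have hu : (r - r ^ 2) • L' x = f (r • x) - r ^ 2 • f x := by
        have e1 := hsum (r • x)
        have e2 := hsum x
        have e3 := hQhom r x
        have e4 := L'.map_smul r x
        linear_combination (norm := module) (r ^ 2 : R) • e2 - e1 - e3 - e4
      rw [hLdef, ← hu, ← mul_smul, hcu, one_smul]
    have h1' : L' = L := LinearMap.ext hL'
    have h2' : Q = fun x => f x - L x := by
      funext x
      rw [← hL' x]
      have := hsum x
      linear_combination (norm := module) -this
    simp only [Prod.mk.injEq]
    exact ⟨h1', h2'⟩
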